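/- Let 0<q<1 and φ1, φ2 real. Define operators on l^2(Z≥0) by Z11 e_k = -e^(i(φ1+φ2)) q^(-1) sqrt(1-q^(2k)) e_{k-1} (with Z11 e_0 = 0), Z21 e_k = e^(i φ1) q^k e_k, Z12 e_k = e^(i φ2) q^k e_k, Z22 e_k = sqrt(1-q^(2(k+1))) e_{k+1}. Then these bounded operators satisfy all defining relations of Pol(Mat_{2,2})_q (with * the Hilbert-space adjoint); in particular they verify z11* z11 = q^2 z11 z11* - (1-q^2)(z21 z21* + z12 z12*) + q^(-2)(1-q^2)^2 z22 z22* + (1-q^2). -/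

import Mathlib

open ContinuousLinearMap

variable {H : Type*} [NormedAddCommGroup H] [InnerProductSpace ℂ H] [CompleteSpace H]

/-- The defining relations (1)–(3) of `Pol(Mat₂,₂)_q` for a quadruple of bounded
operators on a Hilbert space (`*` is the Hilbert-space adjoint). -/
def IsPolRep (q : ℝ) (z11 z21 z12 z22 : H →L[ℂ] H) : Prop :=
  z11 * z21 = (q : ℂ) • (z21 * z11) ∧
  z11 * z12 = (q : ℂ) • (z12 * z11) ∧
  z21 * z12 = z12 * z21 ∧
  z21 * z22 = (q : ℂ) • (z22 * z21) ∧
  z12 * z22 = (q : ℂ) • (z22 * z12) ∧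
  z11 * z22 - z22 * z11 = ((q : ℂ) - (q : ℂ)⁻¹) • (z12 * z21) ∧
  adjoint z11 * z11 = ((q : ℂ) ^ 2) • (z11 * adjoint z11)
    - (1 - (q : ℂ) ^ 2) • (z21 * adjoint z21 + z12 * adjoint z12)
    + ((q : ℂ)⁻¹ ^ 2 * (1 - (q : ℂ) ^ 2) ^ 2) • (z22 * adjoint z22)
    + (1 - (q : ℂ) ^ 2) • 1 ∧
  adjoint z21 * z21 = ((q : ℂ) ^ 2) • (z21 * adjoint z21)
    - (1 - (q : ℂ) ^ 2) • (z22 * adjoint z22) + (1 - (q : ℂ) ^ 2) • 1 ∧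
  adjoint z12 * z12 = ((q : ℂ) ^ 2) • (z12 * adjoint z12)
    - (1 - (q : ℂ) ^ 2) • (z22 * adjoint z22) + (1 - (q : ℂ) ^ 2) • 1 ∧
  adjoint z22 * z22 = ((q : ℂ) ^ 2) • (z22 * adjoint z22) + (1 - (q : ℂ) ^ 2) • 1 ∧
  adjoint z11 * z21 - (q : ℂ) • (z21 * adjoint z11)
    = ((q : ℂ) - (q : ℂ)⁻¹) • (z22 * adjoint z12) ∧
  adjoint z11 * z12 - (q : ℂ) • (z12 * adjoint z11)
    = ((q : ℂ) - (q : ℂ)⁻¹) • (z22 * adjoint z21) ∧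
  adjoint z11 * z22 = z22 * adjoint z11 ∧
  adjoint z22 * z21 = (q : ℂ) • (z21 * adjoint z22) ∧
  adjoint z22 * z12 = (q : ℂ) • (z12 * adjoint z22) ∧
  adjoint z21 * z12 = z12 * adjoint z21

/-- The standard orthonormal basis vector `e k` of `ℓ²(ℤ≥0)`. -/
noncomputable def e (k : ℕ) : lp (fun _ : ℕ => ℂ) 2 := lp.single 2 k 1

local notation "ℓ2" => lp (fun _ : ℕ => ℂ) 2

lemma inner_e_left (j : ℕ) (f : ℓ2) : inner (𝕜 := ℂ) (e j) f = f j := by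
  simp [e, lp.inner_single_left]

lemma inner_e (j k : ℕ) : inner (𝕜 := ℂ) (e j) (e k) = if j = k then 1 else 0 := by
  rw [inner_e_left]
  simp only [e]
  rcases eq_or_ne j k with rfl | h
  · simp [lp.single_apply_self]
  · rw [lp.single_apply_ne _ _ _ h]
    simp [h]

lemma vec_ext {x y : ℓ2} (h : ∀ j, inner (𝕜 := ℂ) (e j) x = inner (𝕜 := ℂ) (e j) y) :
    x = y := by
  apply lp.ext
  funext j
  simpa [inner_e_left] using h j

lemma dense_e : Dense (↑(Submodule.span ℂ (Set.range e)) : Set ℓ2) := by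
  rw [Submodule.dense_iff_topologicalClosure_eq_top]
  let b : HilbertBasis ℕ ℂ ℓ2 := HilbertBasis.ofRepr (LinearIsometryEquiv.refl ℂ _)
  have hb : ∀ i, (b : ℕ → ℓ2) i = e i := fun i => by
    rw [← b.repr_symm_single]; rfl
  have : Set.range e = Set.range (b : ℕ → ℓ2) := by
    ext x; constructor <;> rintro ⟨i, rfl⟩
    · exact ⟨i, hb i⟩
    · exact ⟨i, (hb i).symm⟩
  rw [this]
  exact b.dense_span

lemma op_ext {A B : ℓ2 →L[ℂ] ℓ2} (h : ∀ k, A (e k) = B (e k)) : A = B :=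
  ContinuousLinearMap.ext_on dense_e (by rintro x ⟨k, rfl⟩; exact h k)

lemma adjoint_diag {A : ℓ2 →L[ℂ] ℓ2} {c : ℕ → ℂ} (h : ∀ k, A (e k) = c k • e k) (k : ℕ) :
    adjoint A (e k) = (starRingEnd ℂ) (c k) • e k := by
  apply vec_ext; intro j
  rw [ContinuousLinearMap.adjoint_inner_right, h j, inner_smul_left, inner_smul_right,
    inner_e]
  rcases eq_or_ne j k with rfl | hjk
  · simp
  · simp [hjk]

/-- adjoint of a lowering operator is raising -/
lemma adjoint_lower {A : ℓ2 →L[ℂ] ℓ2} {c : ℕ → ℂ} (h0 : A (e 0) = 0)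
    (h : ∀ k, A (e (k + 1)) = c k • e k) (k : ℕ) :
    adjoint A (e k) = (starRingEnd ℂ) (c k) • e (k + 1) := by
  apply vec_ext; intro j
  rw [ContinuousLinearMap.adjoint_inner_right, inner_smul_right, inner_e]
  cases j with
  | zero => simp [h0, Nat.succ_ne_zero]
  | succ m =>
    rw [h m, inner_smul_left, inner_e]
    rcases eq_or_ne m k with rfl | hmk
    · simp
    · simp [hmk]

/-- adjoint of a raising operator is lowering -/
lemma adjoint_raise_zero {A : ℓ2 →L[ℂ] ℓ2} {c : ℕ → ℂ}
    (h : ∀ k, A (e k) = c k • e (k + 1)) : adjoint A (e 0) = 0 := by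
  apply vec_ext; intro j
  rw [ContinuousLinearMap.adjoint_inner_right, h j, inner_smul_left, inner_e]
  simp [Nat.succ_ne_zero]

lemma adjoint_raise {A : ℓ2 →L[ℂ] ℓ2} {c : ℕ → ℂ}
    (h : ∀ k, A (e k) = c k • e (k + 1)) (k : ℕ) :
    adjoint A (e (k + 1)) = (starRingEnd ℂ) (c k) • e k := by
  apply vec_ext; intro j
  rw [ContinuousLinearMap.adjoint_inner_right, h j, inner_smul_left, inner_smul_right,
    inner_e]
  rcases eq_or_ne j k with rfl | hjk
  · simp [inner_e, e, lp.norm_single]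
  · simp [inner_e, hjk]

set_option maxHeartbeats 2000000 in
theorem stmt_12 (q : ℝ) (hq0 : 0 < q) (hq1 : q < 1) (φ1 φ2 : ℝ)
    (Z11 Z21 Z12 Z22 : lp (fun _ : ℕ => ℂ) 2 →L[ℂ] lp (fun _ : ℕ => ℂ) 2)
    (h11z : Z11 (e 0) = 0)
    (h11 : ∀ k : ℕ, Z11 (e (k + 1)) =
      (-Complex.exp ((φ1 + φ2 : ℝ) * Complex.I) * (q : ℂ)⁻¹
        * (Real.sqrt (1 - q ^ (2 * (k + 1))) : ℂ)) • e k)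
    (h21 : ∀ k : ℕ, Z21 (e k) = (Complex.exp (φ1 * Complex.I) * (q : ℂ) ^ k) • e k)
    (h12 : ∀ k : ℕ, Z12 (e k) = (Complex.exp (φ2 * Complex.I) * (q : ℂ) ^ k) • e k)
    (h22 : ∀ k : ℕ, Z22 (e k) = (Real.sqrt (1 - q ^ (2 * (k + 1))) : ℂ) • e (k + 1)) :
    IsPolRep q Z11 Z21 Z12 Z22 := by
  have hq : (q : ℂ) ≠ 0 := Complex.ofReal_ne_zero.mpr hq0.ne'
  have S : ∀ k : ℕ, ((Real.sqrt (1 - q ^ (2 * k)) : ℝ) : ℂ)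
      * ((Real.sqrt (1 - q ^ (2 * k)) : ℝ) : ℂ) = 1 - (q : ℂ) ^ (2 * k) := by
    intro k
    have h1 : q ^ (2 * k) ≤ 1 := pow_le_one₀ hq0.le hq1.le
    rw [← Complex.ofReal_mul, Real.mul_self_sqrt (by linarith)]
    push_cast; ring
  have E : ∀ φ : ℝ, (starRingEnd ℂ) (Complex.exp (φ * Complex.I))
      * Complex.exp (φ * Complex.I) = 1 := by
    intro φ
    rw [← Complex.exp_conj, ← Complex.exp_add, map_mul, Complex.conj_ofReal, Complex.conj_I]
    have h0 : (↑φ * -Complex.I + ↑φ * Complex.I : ℂ) = 0 := by ring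
    rw [h0, Complex.exp_zero]
  have HA : Complex.exp (((φ1 : ℂ) + (φ2 : ℂ)) * Complex.I)
      = Complex.exp (φ1 * Complex.I) * Complex.exp (φ2 * Complex.I) := by
    rw [← Complex.exp_add]; congr 1; ring
  have S2 : ∀ k : ℕ, ((Real.sqrt (1 - q ^ (2 * k)) : ℝ) : ℂ) ^ 2 = 1 - (q : ℂ) ^ (2 * k) :=
    fun k => by rw [sq]; exact S k
  have CI1 : (starRingEnd ℂ) (Complex.exp ((φ1 : ℂ) * Complex.I))
      = (Complex.exp ((φ1 : ℂ) * Complex.I))⁻¹ := eq_inv_of_mul_eq_one_left (E φ1)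
  have CI2 : (starRingEnd ℂ) (Complex.exp ((φ2 : ℂ) * Complex.I))
      = (Complex.exp ((φ2 : ℂ) * Complex.I))⁻¹ := eq_inv_of_mul_eq_one_left (E φ2)
  have hc1ne : Complex.exp ((φ1 : ℂ) * Complex.I) ≠ 0 := Complex.exp_ne_zero _
  have hc2ne : Complex.exp ((φ2 : ℂ) * Complex.I) ≠ 0 := Complex.exp_ne_zero _
  have S2' := S2
  ring_nf at S2'
  have A21 := adjoint_diag h21
  have A12 := adjoint_diag h12
  have A22z := adjoint_raise_zero h22
  have A22 := adjoint_raise h22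
  have A11 := adjoint_lower h11z h11
  have hqt : (q : ℂ) * (q : ℂ)⁻¹ = 1 := mul_inv_cancel₀ hq
  have hinv1 : (Complex.exp ((φ1:ℂ) * Complex.I))⁻¹ * Complex.exp ((φ1:ℂ) * Complex.I) = 1 :=
    inv_mul_cancel₀ hc1ne
  have hinv2 : (Complex.exp ((φ2:ℂ) * Complex.I))⁻¹ * Complex.exp ((φ2:ℂ) * Complex.I) = 1 :=
    inv_mul_cancel₀ hc2ne
  refine ⟨?_, ?_, ?_, ?_, ?_, ?_, ?_, ?_, ?_, ?_, ?_, ?_, ?_, ?_, ?_, ?_⟩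
  · apply op_ext; intro k
    rcases k with _ | m <;>
      simp only [ContinuousLinearMap.mul_apply, ContinuousLinearMap.add_apply,
        ContinuousLinearMap.sub_apply, ContinuousLinearMap.smul_apply,
        ContinuousLinearMap.one_apply, h11z, h11, h21, h12, h22, A11, A21, A12, A22z, A22,
        map_smul, map_zero, smul_zero, map_mul, map_neg, map_inv₀, map_pow,
        Complex.conj_ofReal, zero_smul, smul_smul, Complex.ofReal_add, HA, CI1, CI2] <;>
      try match_scalars
    all_goals ring1
  · apply op_ext; intro k
    rcases k with _ | m <;>
      simp only [ContinuousLinearMap.mul_apply, ContinuousLinearMap.add_apply,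
        ContinuousLinearMap.sub_apply, ContinuousLinearMap.smul_apply,
        ContinuousLinearMap.one_apply, h11z, h11, h21, h12, h22, A11, A21, A12, A22z, A22,
        map_smul, map_zero, smul_zero, map_mul, map_neg, map_inv₀, map_pow,
        Complex.conj_ofReal, zero_smul, smul_smul, Complex.ofReal_add, HA, CI1, CI2] <;>
      try match_scalars
    all_goals ring1
  · apply op_ext; intro k
    rcases k with _ | m <;>
      simp only [ContinuousLinearMap.mul_apply, ContinuousLinearMap.add_apply,
        ContinuousLinearMap.sub_apply, ContinuousLinearMap.smul_apply,
        ContinuousLinearMap.one_apply, h11z, h11, h21, h12, h22, A11, A21, A12, A22z, A22,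
        map_smul, map_zero, smul_zero, map_mul, map_neg, map_inv₀, map_pow,
        Complex.conj_ofReal, zero_smul, smul_smul, Complex.ofReal_add, HA, CI1, CI2] <;>
      try match_scalars
    all_goals ring1
  · apply op_ext; intro k
    rcases k with _ | m <;>
      simp only [ContinuousLinearMap.mul_apply, ContinuousLinearMap.add_apply,
        ContinuousLinearMap.sub_apply, ContinuousLinearMap.smul_apply,
        ContinuousLinearMap.one_apply, h11z, h11, h21, h12, h22, A11, A21, A12, A22z, A22,
        map_smul, map_zero, smul_zero, map_mul, map_neg, map_inv₀, map_pow,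
        Complex.conj_ofReal, zero_smul, smul_smul, Complex.ofReal_add, HA, CI1, CI2] <;>
      try match_scalars
    all_goals ring1
  · apply op_ext; intro k
    rcases k with _ | m <;>
      simp only [ContinuousLinearMap.mul_apply, ContinuousLinearMap.add_apply,
        ContinuousLinearMap.sub_apply, ContinuousLinearMap.smul_apply,
        ContinuousLinearMap.one_apply, h11z, h11, h21, h12, h22, A11, A21, A12, A22z, A22,
        map_smul, map_zero, smul_zero, map_mul, map_neg, map_inv₀, map_pow,
        Complex.conj_ofReal, zero_smul, smul_smul, Complex.ofReal_add, HA, CI1, CI2] <;>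
      try match_scalars
    all_goals ring1
  · apply op_ext; intro k
    rcases k with _ | m <;>
      simp only [ContinuousLinearMap.mul_apply, ContinuousLinearMap.add_apply,
        ContinuousLinearMap.sub_apply, ContinuousLinearMap.smul_apply,
        ContinuousLinearMap.one_apply, h11z, h11, h21, h12, h22, A11, A21, A12, A22z, A22,
        map_smul, map_zero, smul_zero, map_mul, map_neg, map_inv₀, map_pow,
        Complex.conj_ofReal, zero_smul, smul_smul, Complex.ofReal_add, HA, CI1, CI2] <;>
      match_scalars
    · linear_combination (Complex.exp ((φ1:ℂ) * Complex.I) * Complex.exp ((φ2:ℂ) * Complex.I) * (q:ℂ)) * hqt - (Complex.exp ((φ1:ℂ) * Complex.I) * Complex.exp ((φ2:ℂ) * Complex.I) * (q:ℂ)⁻¹) * S (0 + 1)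
    · linear_combination (Complex.exp ((φ1:ℂ) * Complex.I) * Complex.exp ((φ2:ℂ) * Complex.I) * (q:ℂ) ^ (2 * m + 3)) * hqt + (Complex.exp ((φ1:ℂ) * Complex.I) * Complex.exp ((φ2:ℂ) * Complex.I) * (q:ℂ)⁻¹) * S (m + 1) - (Complex.exp ((φ1:ℂ) * Complex.I) * Complex.exp ((φ2:ℂ) * Complex.I) * (q:ℂ)⁻¹) * S (m + 1 + 1)
  · apply op_ext; intro k
    rcases k with _ | m <;>
      simp only [ContinuousLinearMap.mul_apply, ContinuousLinearMap.add_apply,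
        ContinuousLinearMap.sub_apply, ContinuousLinearMap.smul_apply,
        ContinuousLinearMap.one_apply, h11z, h11, h21, h12, h22, A11, A21, A12, A22z, A22,
        map_smul, map_zero, smul_zero, map_mul, map_neg, map_inv₀, map_pow,
        Complex.conj_ofReal, zero_smul, smul_smul, Complex.ofReal_add, HA, CI1, CI2] <;>
      match_scalars
    · linear_combination (1 - (q:ℂ) ^ 2 - Complex.exp ((φ2:ℂ) * Complex.I) * (Complex.exp ((φ2:ℂ) * Complex.I))⁻¹ * (q:ℂ) ^ 2 * (q:ℂ)⁻¹ ^ 2 * ((Real.sqrt (1 - q ^ (2 * (0 + 1))) : ℝ) : ℂ) ^ 2) * hinv1 + (1 - (q:ℂ) ^ 2 - (q:ℂ) ^ 2 * (q:ℂ)⁻¹ ^ 2 * ((Real.sqrt (1 - q ^ (2 * (0 + 1))) : ℝ) : ℂ) ^ 2) * hinv2 + (-(((Real.sqrt (1 - q ^ (2 * (0 + 1))) : ℝ) : ℂ) ^ 2) - (q:ℂ) * (q:ℂ)⁻¹ * ((Real.sqrt (1 - q ^ (2 * (0 + 1))) : ℝ) : ℂ) ^ 2) * hqt - S (0 + 1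)
    · linear_combination ((q:ℂ) ^ (2 * m + 2) - (q:ℂ) ^ (2 * m + 4) + Complex.exp ((φ2:ℂ) * Complex.I) * (Complex.exp ((φ2:ℂ) * Complex.I))⁻¹ * (q:ℂ)⁻¹ ^ 2 * ((Real.sqrt (1 - q ^ (2 * (m + 1))) : ℝ) : ℂ) ^ 2 - Complex.exp ((φ2:ℂ) * Complex.I) * (Complex.exp ((φ2:ℂ) * Complex.I))⁻¹ * (q:ℂ) ^ 2 * (q:ℂ)⁻¹ ^ 2 * ((Real.sqrt (1 - q ^ (2 * (m + 1 + 1))) : ℝ) : ℂ) ^ 2) * hinv1 + ((q:ℂ)⁻¹ ^ 2 * ((Real.sqrt (1 - q ^ (2 * (m + 1))) : ℝ) : ℂ) ^ 2 + (q:ℂ) ^ (2 * m + 2) - (q:ℂ) ^ 2 * (q:ℂ)⁻¹ ^ 2 * ((Real.sqrt (1 - q ^ (2 * (m + 1 + 1))) : ℝ) : ℂ) ^ 2 - (q:ℂ) ^ (2 * m + 4)) * hinv2 + (-(((Real.sqrt (1 - q ^ (2 * (m + 1 + 1))) : ℝ) : ℂ) ^ 2) + 2 * ((Real.sqrt (1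 - q ^ (2 * (m + 1))) : ℝ) : ℂ) ^ 2 - (q:ℂ) * (q:ℂ)⁻¹ * ((Real.sqrt (1 - q ^ (2 * (m + 1 + 1))) : ℝ) : ℂ) ^ 2 + 2 * (q:ℂ) * (q:ℂ)⁻¹ * ((Real.sqrt (1 - q ^ (2 * (m + 1))) : ℝ) : ℂ) ^ 2 - (q:ℂ) ^ 2 * ((Real.sqrt (1 - q ^ (2 * (m + 1))) : ℝ) : ℂ) ^ 2 - (q:ℂ) ^ 3 * (q:ℂ)⁻¹ * ((Real.sqrt (1 - q ^ (2 * (m + 1))) : ℝ) : ℂ) ^ 2) * hqt + (2 - (q:ℂ) ^ 2) * S (m + 1) - S (m + 1 + 1)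
  · apply op_ext; intro k
    rcases k with _ | m <;>
      simp only [ContinuousLinearMap.mul_apply, ContinuousLinearMap.add_apply,
        ContinuousLinearMap.sub_apply, ContinuousLinearMap.smul_apply,
        ContinuousLinearMap.one_apply, h11z, h11, h21, h12, h22, A11, A21, A12, A22z, A22,
        map_smul, map_zero, smul_zero, map_mul, map_neg, map_inv₀, map_pow,
        Complex.conj_ofReal, zero_smul, smul_smul, Complex.ofReal_add, HA, CI1, CI2] <;>
      match_scalars
    · linear_combination (1 - (q:ℂ) ^ 2) * hinv1
    · linear_combination ((q:ℂ) ^ (2 * m + 2) - (q:ℂ) ^ (2 * m + 4)) * hinv1 + (1 - (q:ℂ) ^ 2) * S (m + 1)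
  · apply op_ext; intro k
    rcases k with _ | m <;>
      simp only [ContinuousLinearMap.mul_apply, ContinuousLinearMap.add_apply,
        ContinuousLinearMap.sub_apply, ContinuousLinearMap.smul_apply,
        ContinuousLinearMap.one_apply, h11z, h11, h21, h12, h22, A11, A21, A12, A22z, A22,
        map_smul, map_zero, smul_zero, map_mul, map_neg, map_inv₀, map_pow,
        Complex.conj_ofReal, zero_smul, smul_smul, Complex.ofReal_add, HA, CI1, CI2] <;>
      match_scalars
    · linear_combination (1 - (q:ℂ) ^ 2) * hinv2
    · linear_combination ((q:ℂ) ^ (2 * m + 2) - (q:ℂ) ^ (2 * m + 4)) * hinv2 + (1 - (q:ℂ) ^ 2) * S (m + 1)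
  · apply op_ext; intro k
    rcases k with _ | m <;>
      simp only [ContinuousLinearMap.mul_apply, ContinuousLinearMap.add_apply,
        ContinuousLinearMap.sub_apply, ContinuousLinearMap.smul_apply,
        ContinuousLinearMap.one_apply, h11z, h11, h21, h12, h22, A11, A21, A12, A22z, A22,
        map_smul, map_zero, smul_zero, map_mul, map_neg, map_inv₀, map_pow,
        Complex.conj_ofReal, zero_smul, smul_smul, Complex.ofReal_add, HA, CI1, CI2] <;>
      match_scalars
    · linear_combination S (0 + 1)
    · linear_combination S (m + 1 + 1) - (q:ℂ) ^ 2 * S (m + 1)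
  · apply op_ext; intro k
    rcases k with _ | m <;>
      simp only [ContinuousLinearMap.mul_apply, ContinuousLinearMap.add_apply,
        ContinuousLinearMap.sub_apply, ContinuousLinearMap.smul_apply,
        ContinuousLinearMap.one_apply, h11z, h11, h21, h12, h22, A11, A21, A12, A22z, A22,
        map_smul, map_zero, smul_zero, map_mul, map_neg, map_inv₀, map_pow,
        Complex.conj_ofReal, zero_smul, smul_smul, Complex.ofReal_add, HA, CI1, CI2] <;>
      match_scalars
    · linear_combination ((Complex.exp ((φ2:ℂ) * Complex.I))⁻¹ * (q:ℂ) ^ 2 * (q:ℂ)⁻¹ * ((Real.sqrt (1 - q ^ (2 * (0 + 1))) : ℝ) : ℂ) - (Complex.exp ((φ2:ℂ) * Complex.I))⁻¹ * (q:ℂ)⁻¹ * ((Real.sqrt (1 - q ^ (2 * (0 + 1))) : ℝ) : ℂ)) * hinv1 + ((Complex.exp ((φ2:ℂ) * Complex.I))⁻¹ * (q:ℂ) * ((Real.sqrt (1 - q ^ (2 * (0 + 1))) : ℝ) : ℂ)) * hqt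
    · linear_combination ((Complex.exp ((φ2:ℂ) * Complex.I))⁻¹ * (q:ℂ) ^ (m + 3) * (q:ℂ)⁻¹ * ((Real.sqrt (1 - q ^ (2 * (m + 1 + 1))) : ℝ) : ℂ) - (Complex.exp ((φ2:ℂ) * Complex.I))⁻¹ * (q:ℂ) ^ (m + 1) * (q:ℂ)⁻¹ * ((Real.sqrt (1 - q ^ (2 * (m + 1 + 1))) : ℝ) : ℂ)) * hinv1 + ((Complex.exp ((φ2:ℂ) * Complex.I))⁻¹ * (q:ℂ) ^ (m + 2) * ((Real.sqrt (1 - q ^ (2 * (m + 1 + 1))) : ℝ) : ℂ)) * hqt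
  · apply op_ext; intro k
    rcases k with _ | m <;>
      simp only [ContinuousLinearMap.mul_apply, ContinuousLinearMap.add_apply,
        ContinuousLinearMap.sub_apply, ContinuousLinearMap.smul_apply,
        ContinuousLinearMap.one_apply, h11z, h11, h21, h12, h22, A11, A21, A12, A22z, A22,
        map_smul, map_zero, smul_zero, map_mul, map_neg, map_inv₀, map_pow,
        Complex.conj_ofReal, zero_smul, smul_smul, Complex.ofReal_add, HA, CI1, CI2] <;>
      match_scalars
    · linear_combination ((Complex.exp ((φ1:ℂ) * Complex.I))⁻¹ * (q:ℂ) ^ 2 * (q:ℂ)⁻¹ * ((Real.sqrt (1 - q ^ (2 * (0 + 1))) : ℝ) : ℂ) - (Complex.exp ((φ1:ℂ) * Complex.I))⁻¹ * (q:ℂ)⁻¹ * ((Real.sqrt (1 - q ^ (2 * (0 + 1))) : ℝ) : ℂ)) * hinv2 + ((Complex.exp ((φ1:ℂ) * Complex.I))⁻¹ * (q:ℂ) * ((Real.sqrt (1 - q ^ (2 * (0 + 1))) : ℝ) : ℂ)) * hqt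
    · linear_combination ((Complex.exp ((φ1:ℂ) * Complex.I))⁻¹ * (q:ℂ) ^ (m + 3) * (q:ℂ)⁻¹ * ((Real.sqrt (1 - q ^ (2 * (m + 1 + 1))) : ℝ) : ℂ) - (Complex.exp ((φ1:ℂ) * Complex.I))⁻¹ * (q:ℂ) ^ (m + 1) * (q:ℂ)⁻¹ * ((Real.sqrt (1 - q ^ (2 * (m + 1 + 1))) : ℝ) : ℂ)) * hinv2 + ((Complex.exp ((φ1:ℂ) * Complex.I))⁻¹ * (q:ℂ) ^ (m + 2) * ((Real.sqrt (1 - q ^ (2 * (m + 1 + 1))) : ℝ) : ℂ)) * hqt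
  · apply op_ext; intro k
    rcases k with _ | m <;>
      simp only [ContinuousLinearMap.mul_apply, ContinuousLinearMap.add_apply,
        ContinuousLinearMap.sub_apply, ContinuousLinearMap.smul_apply,
        ContinuousLinearMap.one_apply, h11z, h11, h21, h12, h22, A11, A21, A12, A22z, A22,
        map_smul, map_zero, smul_zero, map_mul, map_neg, map_inv₀, map_pow,
        Complex.conj_ofReal, zero_smul, smul_smul, Complex.ofReal_add, HA, CI1, CI2] <;>
      try match_scalars
    all_goals ring1
  · apply op_ext; intro k
    rcases k with _ | m <;>
      simp only [ContinuousLinearMap.mul_apply, ContinuousLinearMap.add_apply,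
        ContinuousLinearMap.sub_apply, ContinuousLinearMap.smul_apply,
        ContinuousLinearMap.one_apply, h11z, h11, h21, h12, h22, A11, A21, A12, A22z, A22,
        map_smul, map_zero, smul_zero, map_mul, map_neg, map_inv₀, map_pow,
        Complex.conj_ofReal, zero_smul, smul_smul, Complex.ofReal_add, HA, CI1, CI2] <;>
      try match_scalars
    all_goals ring1
  · apply op_ext; intro k
    rcases k with _ | m <;>
      simp only [ContinuousLinearMap.mul_apply, ContinuousLinearMap.add_apply,
        ContinuousLinearMap.sub_apply, ContinuousLinearMap.smul_apply,
        ContinuousLinearMap.one_apply, h11z, h11, h21, h12, h22, A11, A21, A12, A22z, A22,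
        map_smul, map_zero, smul_zero, map_mul, map_neg, map_inv₀, map_pow,
        Complex.conj_ofReal, zero_smul, smul_smul, Complex.ofReal_add, HA, CI1, CI2] <;>
      try match_scalars
    all_goals ring1
  · apply op_ext; intro k
    rcases k with _ | m <;>
      simp only [ContinuousLinearMap.mul_apply, ContinuousLinearMap.add_apply,
        ContinuousLinearMap.sub_apply, ContinuousLinearMap.smul_apply,
        ContinuousLinearMap.one_apply, h11z, h11, h21, h12, h22, A11, A21, A12, A22z, A22,
        map_smul, map_zero, smul_zero, map_mul, map_neg, map_inv₀, map_pow,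
        Complex.conj_ofReal, zero_smul, smul_smul, Complex.ofReal_add, HA, CI1, CI2] <;>
      try match_scalars
    all_goals ring1
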